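/- arXiv:1606.09329 — 2 statements merged into one kernel-verified Lean document; each statement's English description precedes it below -/
import Mathlib

section
/- Let A ∈ ℝ^{n×n}, B ∈ ℝ^{n×p}, let Q ∈ ℝ^{n×n} be symmetric positive definite, and let P ∈ ℝ^{n×n} be a symmetric positive definite solution of the algebraic Riccati equation PA + AᵀP − PBBᵀP + Q = 0. Then for every real c ≥ 1/2, the matrix PA + AᵀP − 2c·PBBᵀP is negative definite; more precisely PA + AᵀP − 2c·PBBᵀP ≤ −Q in the positive semidefinite (Loewner) order. -/
open Matrix

/-- If `P > 0` solves the ARE `PA + AᵀP − PBBᵀP + Q = 0` with `Q > 0`, then for every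
`c ≥ 1/2` the matrix `PA + AᵀP − 2c·PBBᵀP` is negative definite; more precisely
`PA + AᵀP − 2c·PBBᵀP ≤ −Q` in the Loewner order (`−Q − X` is PSD). -/
theorem stmt_8 {n p : ℕ} (A : Matrix (Fin n) (Fin n) ℝ) (B : Matrix (Fin n) (Fin p) ℝ)
    (Q P : Matrix (Fin n) (Fin n) ℝ) (hQ : Q.PosDef) (hP : P.PosDef)
    (hric : P * A + Aᵀ * P - P * B * Bᵀ * P + Q = 0)
    (c : ℝ) (hc : 1 / 2 ≤ c) :
    (-Q - (P * A + Aᵀ * P - (2 * c) • (P * B * Bᵀ * P))).PosSemidef ∧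
    (-(P * A + Aᵀ * P - (2 * c) • (P * B * Bᵀ * P))).PosDef := by
  have hPA : P * A + Aᵀ * P = P * B * Bᵀ * P - Q := by
    have h := hric
    rw [sub_add_eq_add_sub, sub_eq_zero] at h
    rw [eq_sub_iff_add_eq, h]
  have hpsd : (P * B * Bᵀ * P).PosSemidef := by
    have : P * B * Bᵀ * P = (Bᵀ * P)ᴴ * (Bᵀ * P) := by
      rw [conjTranspose_mul, hP.isHermitian.eq, conjTranspose_eq_transpose_of_trivial,
        transpose_transpose, Matrix.mul_assoc, Matrix.mul_assoc]
    rw [this]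
    exact posSemidef_conjTranspose_mul_self _
  have h2c : (0:ℝ) ≤ 2 * c - 1 := by linarith
  have h1 : -Q - (P * A + Aᵀ * P - (2 * c) • (P * B * Bᵀ * P))
      = (2 * c - 1) • (P * B * Bᵀ * P) := by
    rw [hPA]; ext i j
    simp [Matrix.sub_apply, Matrix.add_apply, Matrix.neg_apply, Matrix.smul_apply]
    ring
  have h2 : -(P * A + Aᵀ * P - (2 * c) • (P * B * Bᵀ * P))
      = Q + (2 * c - 1) • (P * B * Bᵀ * P) := by
    rw [hPA]; ext i j
    simp [Matrix.sub_apply, Matrix.add_apply, Matrix.neg_apply, Matrix.smul_apply]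
    ring
  have hsm : ((2 * c - 1) • (P * B * Bᵀ * P)).PosSemidef := by
    refine ⟨by rw [Matrix.IsHermitian, conjTranspose_smul, star_trivial, hpsd.1.eq], fun x => ?_⟩
    have h := smul_nonneg h2c (hpsd.2 x)
    simp only [Finsupp.sum, smul_eq_mul, Finset.mul_sum] at h ⊢
    exact h.trans_eq (Finset.sum_congr rfl fun i _ => Finset.sum_congr rfl fun j _ => by
      rw [Matrix.smul_apply, smul_eq_mul]; ring)
  exact ⟨h1 ▸ hsm, h2 ▸ hQ.add_posSemidef hsm⟩
end

section
/- Let A ∈ ℝ^{n×n}, B ∈ ℝ^{n×p}, let Q be symmetric positive definite, and let P be a symmetric positive definite solution of the algebraic Riccati equation PA + AᵀP − PBBᵀP + Q = 0. Set K = −BᵀP. Then A + BK is Hurwitz, i.e., every eigenvalue of A + BK has negative real part. -/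
open Matrix
open scoped ComplexOrder

lemma aux_dot {n : ℕ} (M : Matrix (Fin n) (Fin n) ℝ) (u w : Fin n → ℝ) :
    (Complex.ofReal ∘ u) ⬝ᵥ (M.map (algebraMap ℝ ℂ)) *ᵥ (Complex.ofReal ∘ w)
      = ((u ⬝ᵥ M *ᵥ w : ℝ) : ℂ) := by
  have h1 : (M.map (algebraMap ℝ ℂ)) *ᵥ (Complex.ofReal ∘ w)
      = Complex.ofReal ∘ (M *ᵥ w) :=
    funext fun i => ((algebraMap ℝ ℂ).map_mulVec M w i).symm
  rw [h1, show ((u ⬝ᵥ M *ᵥ w : ℝ) : ℂ) = algebraMap ℝ ℂ (u ⬝ᵥ M *ᵥ w) from rfl,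
    RingHom.map_dotProduct]
  rfl

lemma posDef_map_complex {n : ℕ} {M : Matrix (Fin n) (Fin n) ℝ} (hM : M.PosDef) :
    (M.map (algebraMap ℝ ℂ)).PosDef := by
  have hsym : Mᵀ = M := by
    have := hM.isHermitian
    rwa [Matrix.IsHermitian, conjTranspose_eq_transpose_of_trivial] at this
  rw [posDef_iff_dotProduct_mulVec]
  constructor
  · ext i j
    simp only [conjTranspose_apply, Matrix.map_apply]
    rw [show M j i = M i j from (congrFun (congrFun hsym i) j : Mᵀ i j = M i j).symm ▸ rfl]
    simp [Complex.conj_ofReal]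
  · intro v hv
    set x : Fin n → ℝ := fun i => (v i).re with hx
    set y : Fin n → ℝ := fun i => (v i).im with hy
    have hvd : v = (Complex.ofReal ∘ x) + Complex.I • (Complex.ofReal ∘ y) := by
      funext i; simp [hx, hy, Complex.ext_iff]
    have hstar : star v = (Complex.ofReal ∘ x) - Complex.I • (Complex.ofReal ∘ y) := by
      funext i; simp [hx, hy, Complex.ext_iff]
    have hxy : x ⬝ᵥ M *ᵥ y = y ⬝ᵥ M *ᵥ x := by
      rw [Matrix.dotProduct_mulVec, show x ᵥ* M = M *ᵥ x from by
        conv_lhs => rw [← hsym]; rw [vecMul_transpose], dotProduct_comm]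
    have expand : star v ⬝ᵥ (M.map (algebraMap ℝ ℂ)) *ᵥ v
        = ((x ⬝ᵥ M *ᵥ x + y ⬝ᵥ M *ᵥ y : ℝ) : ℂ) := by
      rw [hstar]; conv_lhs => rw [hvd]
      rw [mulVec_add, mulVec_smul, dotProduct_add, sub_dotProduct, sub_dotProduct,
        smul_dotProduct, smul_dotProduct, dotProduct_smul, dotProduct_smul,
        aux_dot, aux_dot, aux_dot, aux_dot, hxy]
      rw [smul_smul, Complex.I_mul_I]
      simp
      ring
    rw [expand]
    have hpos : 0 < x ⬝ᵥ M *ᵥ x + y ⬝ᵥ M *ᵥ y := by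
      have hx0 : x ≠ 0 ∨ y ≠ 0 := by
        by_contra h
        push_neg at h
        apply hv
        funext i
        have h1 := congrFun h.1 i
        have h2 := congrFun h.2 i
        simp [hx, hy] at h1 h2
        exact Complex.ext h1 h2
      have hxx : 0 ≤ x ⬝ᵥ M *ᵥ x := by simpa using hM.posSemidef.dotProduct_mulVec_nonneg x
      have hyy : 0 ≤ y ⬝ᵥ M *ᵥ y := by simpa using hM.posSemidef.dotProduct_mulVec_nonneg y
      rcases hx0 with h | h
      · have := hM.dotProduct_mulVec_pos h; simp at this; linarith
      · have := hM.dotProduct_mulVec_pos h; simp at this; linarith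
    rw [show (0:ℂ) = ((0:ℝ):ℂ) from rfl]
    exact_mod_cast hpos


/-- If `P > 0` solves the ARE `PA + AᵀP − PBBᵀP + Q = 0` with `Q > 0` and `K = −BᵀP`,
then `A + BK` is Hurwitz: every complex eigenvalue has strictly negative real part. -/
theorem stmt_9 {n p : ℕ} (A : Matrix (Fin n) (Fin n) ℝ) (B : Matrix (Fin n) (Fin p) ℝ)
    (Q P : Matrix (Fin n) (Fin n) ℝ) (hQ : Q.PosDef) (hP : P.PosDef)
    (hric : P * A + Aᵀ * P - P * B * Bᵀ * P + Q = 0)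
    (K : Matrix (Fin p) (Fin n) ℝ) (hK : K = -(Bᵀ * P)) :
    ∀ μ : ℂ, Module.End.HasEigenvalue
      (Matrix.toLin' ((A + B * K).map (algebraMap ℝ ℂ))) μ → μ.re < 0 := by
  intro μ hμ
  obtain ⟨v, hvmem, hv0⟩ := hμ.exists_hasEigenvector
  set f : ℝ →+* ℂ := algebraMap ℝ ℂ with hf
  set Mc : Matrix (Fin n) (Fin n) ℂ := (A + B * K).map f with hMc
  set Pc : Matrix (Fin n) (Fin n) ℂ := P.map f with hPc
  set Qc : Matrix (Fin n) (Fin n) ℂ := Q.map f with hQc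
  set Rc : Matrix (Fin n) (Fin n) ℂ := (P * B * Bᵀ * P).map f with hRc
  have heig : Mc *ᵥ v = μ • v := by
    have := Module.End.mem_eigenspace_iff.mp hvmem
    simpa [Matrix.toLin'_apply] using this
  have hPt : Pᵀ = P := by
    have := hP.isHermitian
    rwa [Matrix.IsHermitian, conjTranspose_eq_transpose_of_trivial] at this
  -- real Lyapunov identity
  have hS : P * (A + B * K) + (A + B * K)ᵀ * P = -(Q + P * B * Bᵀ * P) := by
    have h2 : P * A + Aᵀ * P - P * B * Bᵀ * P = -Q := by
      have := hric
      linear_combination (norm := noncomm_ring) this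
    have key : P * (A + B * K) + (A + B * K)ᵀ * P
        = (P * A + Aᵀ * P - P * B * Bᵀ * P) - P * B * Bᵀ * P := by
      rw [hK]
      simp only [Matrix.transpose_add, Matrix.transpose_neg, Matrix.transpose_mul,
        Matrix.transpose_transpose, hPt, Matrix.mul_add, Matrix.add_mul,
        Matrix.mul_neg, Matrix.neg_mul, ← Matrix.mul_assoc]
      abel
    rw [key, h2]; noncomm_ring
  have hmapneg : ∀ X : Matrix (Fin n) (Fin n) ℝ, (-X).map f = -(X.map f) := by
    intro X; ext i j; simp
  have hSc : Pc * Mc + Mcᵀ * Pc = -(Qc + Rc) := by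
    have := congrArg (fun X : Matrix (Fin n) (Fin n) ℝ => X.map f) hS
    simpa [hMc, hPc, hQc, hRc, Matrix.map_add, Matrix.map_mul, hmapneg,
      Matrix.transpose_map, neg_add] using this
  set q : ℂ := star v ⬝ᵥ Pc *ᵥ v with hq
  have h1 : star v ⬝ᵥ (Pc * Mc) *ᵥ v = μ * q := by
    rw [← Matrix.mulVec_mulVec, heig, Matrix.mulVec_smul, dotProduct_smul]
    rfl
  have hMH : Mcᴴ = Mcᵀ := by
    ext i j
    simp [hMc, hf, conjTranspose_apply, transpose_apply, Matrix.map_apply, Complex.conj_ofReal, Complex.coe_algebraMap]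
  have hstarM : star (Mc *ᵥ v) = Mc *ᵥ star v := by
    rw [Matrix.star_mulVec, hMH, Matrix.vecMul_transpose]
  have h2 : star v ⬝ᵥ (Mcᵀ * Pc) *ᵥ v = (starRingEnd ℂ) μ * q := by
    rw [← Matrix.mulVec_mulVec, Matrix.dotProduct_mulVec, Matrix.vecMul_transpose,
      ← hstarM, heig, star_smul, smul_dotProduct]
    rfl
  have hsum : (μ + starRingEnd ℂ μ) * q
      = -(star v ⬝ᵥ Qc *ᵥ v) - (star v ⬝ᵥ Rc *ᵥ v) := by
    have hdp := congrArg (fun X : Matrix (Fin n) (Fin n) ℂ => star v ⬝ᵥ X *ᵥ v) hSc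
    simp only [Matrix.add_mulVec, Matrix.neg_mulVec, dotProduct_add, dotProduct_neg] at hdp
    rw [h1, h2] at hdp
    linear_combination hdp
  have hQpos : 0 < star v ⬝ᵥ Qc *ᵥ v := (posDef_map_complex hQ).dotProduct_mulVec_pos hv0
  have hqpos : 0 < q := (posDef_map_complex hP).dotProduct_mulVec_pos hv0
  have hRnn : 0 ≤ star v ⬝ᵥ Rc *ᵥ v := by
    have hCT : ((Bᵀ * P).map f)ᴴ = (P * B).map f := by
      ext i j
      have hBP : (Bᵀ * P) j i = (P * B) i j := by
        have : (Bᵀ * P)ᵀ = P * B := by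
          rw [Matrix.transpose_mul, Matrix.transpose_transpose, hPt]
        exact (congrFun (congrFun this i) j).symm ▸ rfl
      simp [hf, conjTranspose_apply, Matrix.map_apply, Complex.conj_ofReal,
        Complex.coe_algebraMap, hBP]
    have hW : Rc = ((Bᵀ * P).map f)ᴴ * ((Bᵀ * P).map f) := by
      rw [hCT, ← Matrix.map_mul, hRc]
      rw [Matrix.mul_assoc (P * B) Bᵀ P]
    rw [hW]
    exact (Matrix.posSemidef_conjTranspose_mul_self _).dotProduct_mulVec_nonneg v
  rw [Complex.lt_def] at hQpos hqpos
  rw [Complex.le_def] at hRnn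
  have hre := congrArg Complex.re hsum
  simp only [Complex.mul_re, Complex.add_re, Complex.add_im, Complex.conj_re,
    Complex.conj_im, Complex.sub_re, Complex.neg_re, add_neg_cancel, zero_mul,
    sub_zero] at hre
  have hq0 : q.im = 0 := hqpos.2.symm
  have hqre : 0 < q.re := by simpa using hqpos.1
  have ha : 0 < (star v ⬝ᵥ Qc *ᵥ v).re := by simpa using hQpos.1
  have hb : 0 ≤ (star v ⬝ᵥ Rc *ᵥ v).re := by simpa using hRnn.1
  nlinarith [hre, hqre, ha, hb]
end
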